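/- Let d ≥ 1, let ω : Fin d → ℝ be injective, and let P be a real d×d matrix with nonnegative entries and each column summing to 1 (a column-stochastic matrix). Let ρ be a complex d×d matrix satisfying the non-Markovian phase-matching condition: there exist complex numbers φ_x with |φ_x| = 1 such that ρ_{xy} = |ρ_{xy}| φ_x φ_y* for all x,y. For each ν ∈ ℝ define the matrix K_ν := Σ_{(x',x) : ω_{x'} − ω_x = ν} φ_x* √(P_{x'|x}) |x'⟩⟨x|. Then: (i) Σ_ν K_ν† K_ν = I (the sum runs over the finitely many ν for which K_ν ≠ 0); (ii) the matrix σ := Σ_ν K_ν ρ K_ν† satisfies σ_{x'y'} = Σ_{(x,y) : ω_x − ω_y = ω_{x'} − ω_{y'}} √(P_{x'|x} P_{y'|y}) |ρ_{xy}| for all x',y'; in particular |σ_{x'y'}| equals the right-hand side of the covariant decoherence bound, simultaneously for all x',y', and the populations transform as σ_{x'x'} = Σ_x P_{x'|x} ρ_{xx}. (Tightness of Theorem 2 under non-Markovian phase matching.) -/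

import Mathlib

open Matrix Finset

/-- **Tightness of Theorem 2 under non-Markovian phase matching.** For a column-stochastic
population transfer matrix `P` and a state `ρ` whose entries factorise as
`ρ_{xy} = |ρ_{xy}| φ_x φ*_y`, the Kraus operators
`K_ν = Σ_{ω_{x'}−ω_x = ν} φ*_x √(P_{x'|x}) |x'⟩⟨x|` define a CPTP map
(`Σ_ν K_ν† K_ν = 1`) whose output saturates the covariant decoherence bound simultaneously
for all entries, while transforming populations by `P`. -/
theorem covariant_decoherence_bound_tight
    (d : ℕ) (hd : 1 ≤ d) (ω : Fin d → ℝ) (hω : Function.Injective ω)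
    (P : Matrix (Fin d) (Fin d) ℝ)
    (hPnn : ∀ x' x, 0 ≤ P x' x)
    (hPcol : ∀ x, ∑ x', P x' x = 1)
    (ρ : Matrix (Fin d) (Fin d) ℂ)
    (φ : Fin d → ℂ) (hφ : ∀ x, ‖φ x‖ = 1)
    (hρ : ∀ x y, ρ x y = (‖ρ x y‖ : ℂ) * φ x * star (φ y))
    (K : ℝ → Matrix (Fin d) (Fin d) ℂ)
    (hK : ∀ ν x' x, K ν x' x =
      if ω x' - ω x = ν then star (φ x) * (Real.sqrt (P x' x) : ℂ) else 0)
    (F : Finset ℝ)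
    (hF : F = Finset.image (fun p : Fin d × Fin d => ω p.1 - ω p.2) Finset.univ)
    (σ : Matrix (Fin d) (Fin d) ℂ)
    (hσ : σ = ∑ ν ∈ F, K ν * ρ * (K ν)ᴴ) :
    (∑ ν ∈ F, (K ν)ᴴ * K ν = 1) ∧
    (∀ x' y', σ x' y' =
      ((∑ p ∈ Finset.univ.filter
          (fun p : Fin d × Fin d => ω p.1 - ω p.2 = ω x' - ω y'),
        Real.sqrt (P x' p.1 * P y' p.2) * ‖ρ p.1 p.2‖ : ℝ) : ℂ)) ∧
    (∀ x' y', ‖σ x' y'‖ =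
      ∑ p ∈ Finset.univ.filter
          (fun p : Fin d × Fin d => ω p.1 - ω p.2 = ω x' - ω y'),
        Real.sqrt (P x' p.1 * P y' p.2) * ‖ρ p.1 p.2‖) ∧
    (∀ x', σ x' x' = ∑ x, (P x' x : ℂ) * ρ x x) := by
  have hmemF : ∀ a b : Fin d, ω a - ω b ∈ F := by
    intro a b; rw [hF]; exact Finset.mem_image.2 ⟨(a, b), Finset.mem_univ _, rfl⟩
  have hφφ : ∀ x : Fin d, (starRingEnd ℂ) (φ x) * φ x = 1 := by
    intro x
    rw [mul_comm, Complex.mul_conj, Complex.normSq_eq_norm_sq, hφ]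
    norm_num
  have ite_sum : ∀ (c : Prop) [Decidable c] (s : Finset (Fin d)) (f : Fin d → ℂ),
      (if c then ∑ a ∈ s, f a else 0) = ∑ a ∈ s, if c then f a else 0 := by
    intro c _ s f
    split_ifs with h
    · rfl
    · simp
  -- key computation of σ entries
  have key : ∀ x' y', σ x' y' = ∑ b, ∑ a,
      (if ω a - ω b = ω x' - ω y' then
        ((Real.sqrt (P x' a) * Real.sqrt (P y' b) * ‖ρ a b‖ : ℝ) : ℂ) else 0) := by
    intro x' y'
    rw [hσ, Matrix.sum_apply]
    simp only [Matrix.mul_apply, Matrix.conjTranspose_apply, hK,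
      apply_ite star, star_zero, star_mul', star_star, Complex.star_def,
      Complex.conj_ofReal, Complex.conj_conj, ite_mul, mul_ite, zero_mul, mul_zero,
      Finset.sum_mul, Finset.mul_sum, ite_sum]
    rw [Finset.sum_comm]
    refine Finset.sum_congr rfl fun b _ => ?_
    rw [Finset.sum_comm]
    refine Finset.sum_congr rfl fun a _ => ?_
    rw [Finset.sum_ite_eq F (ω y' - ω b)]
    simp only [hmemF, if_true]
    have hcond : (ω x' - ω a = ω y' - ω b) ↔ (ω a - ω b = ω x' - ω y') := by
      constructor <;> intro h <;> linarith
    rw [if_congr hcond rfl rfl]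
    split_ifs with h
    · push_cast
      conv_lhs => rw [hρ a b, Complex.star_def]
      calc (starRingEnd ℂ) (φ a) * (Real.sqrt (P x' a) : ℂ) *
            ((‖ρ a b‖ : ℂ) * φ a * (starRingEnd ℂ) (φ b)) *
            (φ b * (Real.sqrt (P y' b) : ℂ))
          = ((starRingEnd ℂ) (φ a) * φ a) * ((starRingEnd ℂ) (φ b) * φ b) *
            ((Real.sqrt (P x' a) : ℂ) * (Real.sqrt (P y' b) : ℂ) * (‖ρ a b‖ : ℂ)) := by
            ring
        _ = (Real.sqrt (P x' a) : ℂ) * (Real.sqrt (P y' b) : ℂ) * (‖ρ a b‖ : ℂ) := by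
            rw [hφφ a, hφφ b, one_mul, one_mul]
    · rfl
  have h2 : ∀ x' y', σ x' y' =
      ((∑ p ∈ Finset.univ.filter
          (fun p : Fin d × Fin d => ω p.1 - ω p.2 = ω x' - ω y'),
        Real.sqrt (P x' p.1 * P y' p.2) * ‖ρ p.1 p.2‖ : ℝ) : ℂ) := by
    intro x' y'
    rw [key x' y', Finset.sum_comm, Finset.sum_filter]
    push_cast
    rw [Fintype.sum_prod_type]
    refine Finset.sum_congr rfl fun a _ => Finset.sum_congr rfl fun b _ => ?_
    split_ifs with h
    · rw [Real.sqrt_mul (hPnn x' a)]; push_cast; ring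
    · simp
  have h3 : ∀ x' y', ‖σ x' y'‖ =
      ∑ p ∈ Finset.univ.filter
          (fun p : Fin d × Fin d => ω p.1 - ω p.2 = ω x' - ω y'),
        Real.sqrt (P x' p.1 * P y' p.2) * ‖ρ p.1 p.2‖ := by
    intro x' y'
    rw [h2 x' y', Complex.norm_real, Real.norm_eq_abs, abs_of_nonneg]
    exact Finset.sum_nonneg fun p _ =>
      mul_nonneg (Real.sqrt_nonneg _) (norm_nonneg _)
  refine ⟨?_, h2, h3, ?_⟩
  · -- trace preservation
    ext i j
    rw [Matrix.sum_apply]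
    simp only [Matrix.mul_apply, Matrix.conjTranspose_apply, hK,
      apply_ite star, star_zero, star_mul', star_star, Complex.star_def,
      Complex.conj_ofReal, Complex.conj_conj, ite_mul, mul_ite, zero_mul, mul_zero,
      Finset.sum_mul, Finset.mul_sum, ite_sum]
    rw [Finset.sum_comm]
    have step : ∀ k : Fin d, (∑ ν ∈ F, if ω k - ω j = ν then
        (if ω k - ω i = ν then
          φ i * (Real.sqrt (P k i) : ℂ) * ((starRingEnd ℂ) (φ j) * (Real.sqrt (P k j) : ℂ))
        else 0) else 0)
        = if i = j then ((P k i : ℝ) : ℂ) else 0 := by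
      intro k
      rw [Finset.sum_ite_eq F (ω k - ω j)]
      simp only [hmemF, if_true]
      have hcond : (ω k - ω i = ω k - ω j) ↔ (i = j) := by
        constructor
        · intro h; exact hω (by linarith : ω i = ω j)
        · intro h; rw [h]
      rw [if_congr hcond rfl rfl]
      split_ifs with h
      · subst h
        calc φ i * (Real.sqrt (P k i) : ℂ) * ((starRingEnd ℂ) (φ i) * (Real.sqrt (P k i) : ℂ))
            = ((starRingEnd ℂ) (φ i) * φ i) * ((Real.sqrt (P k i) : ℂ) * (Real.sqrt (P k i) : ℂ)) := by
              ring
          _ = ((P k i : ℝ) : ℂ) := by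
              rw [hφφ i, one_mul, ← Complex.ofReal_mul, Real.mul_self_sqrt (hPnn k i)]
      · rfl
    rw [Finset.sum_congr rfl fun k _ => step k]
    by_cases h : i = j
    · subst h
      simp only [if_true, Matrix.one_apply_eq, ← Complex.ofReal_sum, hPcol i,
        Complex.ofReal_one]
    · simp [Matrix.one_apply, h]
  · -- populations
    intro x'
    have hdiag : ∀ a b : Fin d, (ω a - ω b = ω x' - ω x') ↔ a = b := by
      intro a b
      rw [sub_self, sub_eq_zero]
      exact ⟨fun h => hω h, fun h => by rw [h]⟩
    have hreal : (∑ p ∈ Finset.univ.filter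
          (fun p : Fin d × Fin d => ω p.1 - ω p.2 = ω x' - ω x'),
        Real.sqrt (P x' p.1 * P x' p.2) * ‖ρ p.1 p.2‖)
        = ∑ a, P x' a * ‖ρ a a‖ := by
      rw [Finset.sum_filter, Fintype.sum_prod_type]
      simp only [hdiag, Finset.sum_ite_eq, Finset.mem_univ, if_true]
      refine Finset.sum_congr rfl fun a _ => ?_
      rw [Real.sqrt_mul_self (hPnn x' a)]
    rw [h2 x' x', hreal]
    push_cast
    refine Finset.sum_congr rfl fun a _ => ?_
    conv_rhs => rw [hρ a a, Complex.star_def]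
    calc ((P x' a : ℝ) : ℂ) * (‖ρ a a‖ : ℂ)
        = ((P x' a : ℝ) : ℂ) * ((‖ρ a a‖ : ℂ) * ((starRingEnd ℂ) (φ a) * φ a)) := by
          rw [hφφ a, mul_one]
      _ = ((P x' a : ℝ) : ℂ) * ((‖ρ a a‖ : ℂ) * φ a * (starRingEnd ℂ) (φ a)) := by
          ring
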